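/- Let (M,d) be a metric space and 𝔪 a Borel measure on M that is positive and finite on every open ball, and suppose there exist N > 1 and κ < 0 such that for every x ∈ M and all 0 < r ≤ R, 𝔪(B_r(x)) · ∫₀^R sinh(t·√(−κ/(N−1)))^{N−1} dt ≥ 𝔪(B_R(x)) · ∫₀^r sinh(t·√(−κ/(N−1)))^{N−1} dt. Then for every r > 0 and every x̄ ∈ M there exist constants C₂ > 0 and C₃ ≥ 0 (with C₃ depending only on κ, N, r, and C₂ additionally on x̄) such that 𝔪(B_r(x)) ≤ C₂ · e^{C₃ · d(x,x̄)} for all x ∈ M; in particular log 𝔪(B_r(x)) ≤ log C₂ + C₃·d(x,x̄). -/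

import Mathlib

open MeasureTheory

/-- eq. (remappo2): on a metric measure space whose measure is
positive and finite on balls and satisfies the Bishop–Gromov inequality of
`CD(κ,N)` type with `κ < 0`, `N > 1`, for every `r > 0` and every base point `x̄`
there are constants `C₂ > 0` and `C₃ ≥ 0` such that
`𝔪(B_r(x)) ≤ C₂ e^{C₃ d(x,x̄)}` for all `x`; in particular
`log 𝔪(B_r(x)) ≤ log C₂ + C₃ d(x,x̄)`. -/
theorem ball_measure_exponential_growth
    {M : Type*} [MetricSpace M] [MeasurableSpace M] [BorelSpace M]
    (𝔪 : Measure M)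
    (hball : ∀ (x : M) (s : ℝ), 0 < s →
      0 < 𝔪 (Metric.ball x s) ∧ 𝔪 (Metric.ball x s) < ⊤)
    (N κ : ℝ) (hN : 1 < N) (hκ : κ < 0)
    (hBG : ∀ (x : M) (r R : ℝ), 0 < r → r ≤ R →
      (𝔪 (Metric.ball x R)).toReal *
          ∫ t in (0:ℝ)..r, Real.sinh (t * Real.sqrt (-κ / (N - 1))) ^ (N - 1)
        ≤ (𝔪 (Metric.ball x r)).toReal *
          ∫ t in (0:ℝ)..R, Real.sinh (t * Real.sqrt (-κ / (N - 1))) ^ (N - 1))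
    (r : ℝ) (hr : 0 < r) (xbar : M) :
    ∃ C₂ C₃ : ℝ, 0 < C₂ ∧ 0 ≤ C₃ ∧
      ∀ x : M,
        (𝔪 (Metric.ball x r)).toReal ≤ C₂ * Real.exp (C₃ * dist x xbar) ∧
        Real.log (𝔪 (Metric.ball x r)).toReal ≤ Real.log C₂ + C₃ * dist x xbar := by
  set a : ℝ := Real.sqrt (-κ / (N - 1)) with ha_def
  have hN1 : (0:ℝ) < N - 1 := by linarith
  have ha : 0 < a := Real.sqrt_pos.2 (div_pos (by linarith) hN1)
  set f : ℝ → ℝ := fun t => Real.sinh (t * a) ^ (N - 1) with hf_def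
  have hfc : Continuous f := by
    apply Continuous.rpow_const (Real.continuous_sinh.comp (continuous_id.mul continuous_const))
    intro x; exact Or.inr (le_of_lt hN1)
  set v : ℝ → ℝ := fun s => ∫ t in (0:ℝ)..s, f t with hv_def
  -- positivity of v r
  have hvr : 0 < v r := by
    apply intervalIntegral.intervalIntegral_pos_of_pos_on
    · exact hfc.intervalIntegrable 0 r
    · intro t ht
      exact Real.rpow_pos_of_pos (Real.sinh_pos_iff.2 (mul_pos ht.1 ha)) _
    · exact hr
  set c : ℝ := a * (N - 1) + 1 with hc_def
  have hc : 0 < c := by positivity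
  -- upper bound for v
  have hvR : ∀ R : ℝ, 0 < R → v R ≤ Real.exp (c * R) := by
    intro R hR
    have h1 : v R ≤ ∫ _ in (0:ℝ)..R, Real.exp (a * (N-1) * R) := by
      apply intervalIntegral.integral_mono_on hR.le (hfc.intervalIntegrable 0 R)
        (intervalIntegrable_const)
      intro t ht
      have h0 : 0 ≤ Real.sinh (t * a) := Real.sinh_nonneg_iff.2 (mul_nonneg ht.1 ha.le)
      have h2 : Real.sinh (t * a) ≤ Real.exp (a * R) := by
        calc Real.sinh (t * a) ≤ Real.exp (t * a) := by
              rw [Real.sinh_eq]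
              nlinarith [Real.exp_pos (-(t*a)), Real.exp_pos (t*a)]
          _ ≤ Real.exp (a * R) := Real.exp_le_exp.2 (by nlinarith [ht.2, ha.le])
      calc f t ≤ Real.exp (a * R) ^ (N - 1) := Real.rpow_le_rpow h0 h2 hN1.le
        _ = Real.exp (a * (N-1) * R) := by
            rw [← Real.exp_mul]; ring_nf
    have h3 : (∫ _ in (0:ℝ)..R, Real.exp (a * (N-1) * R)) = R * Real.exp (a * (N-1) * R) := by
      simp [intervalIntegral.integral_const, smul_eq_mul]
    have h4 : R ≤ Real.exp R := (Real.add_one_le_exp R).trans' (by linarith)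
    calc v R ≤ R * Real.exp (a * (N-1) * R) := h1.trans_eq h3
      _ ≤ Real.exp R * Real.exp (a * (N-1) * R) := by
          apply mul_le_mul_of_nonneg_right h4 (Real.exp_nonneg _)
      _ = Real.exp (c * R) := by rw [← Real.exp_add, hc_def]; ring_nf
  obtain ⟨hpos, hfin⟩ := hball xbar r hr
  have hmr : 0 < (𝔪 (Metric.ball xbar r)).toReal := ENNReal.toReal_pos hpos.ne' hfin.ne
  refine ⟨(𝔪 (Metric.ball xbar r)).toReal / v r * Real.exp (c * r), c, by positivity, hc.le, ?_⟩
  intro x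
  set d : ℝ := dist x xbar with hd_def
  have hd : 0 ≤ d := dist_nonneg
  have key : (𝔪 (Metric.ball x r)).toReal ≤
      (𝔪 (Metric.ball xbar r)).toReal / v r * Real.exp (c * r) * Real.exp (c * d) := by
    have hsub : Metric.ball x r ⊆ Metric.ball xbar (r + d) := by
      intro y hy
      have : dist y xbar ≤ dist y x + dist x xbar := dist_triangle y x xbar
      simp only [Metric.mem_ball] at hy ⊢
      linarith
    have hrd : 0 < r + d := by linarith
    have hmono : (𝔪 (Metric.ball x r)).toReal ≤ (𝔪 (Metric.ball xbar (r+d))).toReal :=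
      ENNReal.toReal_mono (hball xbar (r+d) hrd).2.ne (measure_mono hsub)
    have hbg := hBG xbar r (r + d) hr (by linarith)
    have hBig : (𝔪 (Metric.ball xbar (r+d))).toReal ≤
        (𝔪 (Metric.ball xbar r)).toReal * v (r+d) / v r := by
      rw [le_div_iff₀ hvr]; exact hbg
    have hvb := hvR (r+d) hrd
    calc (𝔪 (Metric.ball x r)).toReal ≤ (𝔪 (Metric.ball xbar r)).toReal * v (r+d) / v r :=
          hmono.trans hBig
      _ ≤ (𝔪 (Metric.ball xbar r)).toReal * Real.exp (c * (r+d)) / v r := by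
          gcongr
      _ = (𝔪 (Metric.ball xbar r)).toReal / v r * Real.exp (c * r) * Real.exp (c * d) := by
          rw [mul_add, Real.exp_add]; ring
  refine ⟨key, ?_⟩
  have hlhs : 0 < (𝔪 (Metric.ball x r)).toReal :=
    ENNReal.toReal_pos (hball x r hr).1.ne' (hball x r hr).2.ne
  calc Real.log (𝔪 (Metric.ball x r)).toReal
      ≤ Real.log ((𝔪 (Metric.ball xbar r)).toReal / v r * Real.exp (c * r) * Real.exp (c * d)) :=
        Real.log_le_log hlhs key
    _ = Real.log ((𝔪 (Metric.ball xbar r)).toReal / v r * Real.exp (c * r)) + c * d := by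
        rw [Real.log_mul (by positivity) (Real.exp_ne_zero _), Real.log_exp]
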